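/- For fixed (t,x) ∈ ℝ², as a → 1/2 from below, the Akhmediev breather B_A(t,x; a) converges pointwise to the Peregrine breather B_P(t,x) = e^{it}(1 - 4(1+2it)/(1+4t²+2x²)). -/

import Mathlib

open Complex

/-- Partial derivative in the first (time) variable. -/
noncomputable def pdt (u : ℝ → ℝ → ℂ) (t x : ℝ) : ℂ := deriv (fun s => u s x) t

/-- Partial derivative in the second (space) variable. -/
noncomputable def pdx (u : ℝ → ℝ → ℂ) (t x : ℝ) : ℂ := deriv (fun y => u t y) x

/-- `u` solves the cubic focusing NLS `i u_t + u_xx + |u|² u = 0`. -/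
def IsNLSSolution (u : ℝ → ℝ → ℂ) : Prop :=
  ∀ t x : ℝ, Complex.I * pdt u t x + pdx (pdx u) t x
    + (((‖u t x‖ : ℝ) : ℂ))^2 * u t x = 0

/-- The Peregrine breather. -/
noncomputable def BP (t x : ℝ) : ℂ :=
  Complex.exp (Complex.I * t) *
    (1 - 4 * (1 + 2 * Complex.I * t) / (1 + 4 * (t:ℂ)^2 + 2 * (x:ℂ)^2))

/-- Parameter `α` of the Akhmediev breather. -/
noncomputable def Aalpha (a : ℝ) : ℝ := Real.sqrt (2 * (1 - 2 * a))

/-- Parameter `β` of the Akhmediev breather. -/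
noncomputable def Abeta (a : ℝ) : ℝ := Real.sqrt (8 * a * (1 - 2 * a))

/-- The Akhmediev breather with parameter `a ∈ (0, 1/2)`. -/
noncomputable def BA (a : ℝ) (t x : ℝ) : ℂ :=
  Complex.exp (Complex.I * t) *
    (1 + (((Aalpha a : ℂ))^2 * Real.cosh (Abeta a * t)
        + Complex.I * (Abeta a) * Real.sinh (Abeta a * t)) /
      ((Real.sqrt (2 * a) : ℂ) * Real.cos (Aalpha a * x) - (Real.cosh (Abeta a * t) : ℂ)))

/-! ### Auxiliary `sinc`-type functions -/

noncomputable def msc (y : ℝ) : ℝ := if y = 0 then 1 else Real.sin y / y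
noncomputable def mshc (y : ℝ) : ℝ := if y = 0 then 1 else Real.sinh y / y

lemma sin_eq_msc (y : ℝ) : Real.sin y = y * msc y := by
  unfold msc
  by_cases h : y = 0 <;> simp [h]
  field_simp

lemma sinh_eq_mshc (y : ℝ) : Real.sinh y = y * mshc y := by
  unfold mshc
  by_cases h : y = 0 <;> simp [h]
  field_simp

lemma tendsto_msc : Filter.Tendsto msc (nhds 0) (nhds 1) := by
  have h := Real.hasDerivAt_sin 0
  rw [hasDerivAt_iff_tendsto_slope] at h
  simp [Real.cos_zero] at h
  have h2 : Filter.Tendsto msc (nhdsWithin 0 {(0:ℝ)}ᶜ) (nhds 1) := by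
    refine h.congr' ?_
    filter_upwards [self_mem_nhdsWithin] with y hy
    simp only [Set.mem_compl_iff, Set.mem_singleton_iff] at hy
    simp [slope_def_field, msc, hy]
  rw [← nhdsNE_sup_pure (0:ℝ), Filter.tendsto_sup]
  refine ⟨h2, ?_⟩
  have h0 : msc 0 = 1 := by simp [msc]
  simpa [h0] using tendsto_pure_nhds msc 0

lemma tendsto_mshc : Filter.Tendsto mshc (nhds 0) (nhds 1) := by
  have h := Real.hasDerivAt_sinh 0
  rw [hasDerivAt_iff_tendsto_slope] at h
  simp [Real.cosh_zero] at h
  have h2 : Filter.Tendsto mshc (nhdsWithin 0 {(0:ℝ)}ᶜ) (nhds 1) := by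
    refine h.congr' ?_
    filter_upwards [self_mem_nhdsWithin] with y hy
    simp only [Set.mem_compl_iff, Set.mem_singleton_iff] at hy
    simp [slope_def_field, mshc, hy]
  rw [← nhdsNE_sup_pure (0:ℝ), Filter.tendsto_sup]
  refine ⟨h2, ?_⟩
  have h0 : mshc 0 = 1 := by simp [mshc]
  simpa [h0] using tendsto_pure_nhds mshc 0

/-! ### Rescaled numerator and denominator -/

/-- Numerator of the breather fraction divided by `α²`. -/
noncomputable def Anum (t : ℝ) (a : ℝ) : ℂ :=
  (Real.cosh (Abeta a * t) : ℂ) + Complex.I * ((4 * a * t * mshc (Abeta a * t) : ℝ) : ℂ)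

/-- Denominator of the breather fraction divided by `α²`. -/
noncomputable def Aden (t x : ℝ) (a : ℝ) : ℝ :=
  Real.sqrt (2 * a) * (-(x ^ 2 / 2) * msc (Aalpha a * x / 2) ^ 2)
    - 1 / (2 * (Real.sqrt (2 * a) + 1)) - 2 * a * t ^ 2 * mshc (Abeta a * t / 2) ^ 2

lemma BA_eq (t x : ℝ) {a : ℝ} (ha : 0 < a) (ha2 : a < 1/2) :
    BA a t x = Complex.exp (Complex.I * t) * (1 + Anum t a / ((Aden t x a : ℝ) : ℂ)) := by
  have h1 : (0:ℝ) < 1 - 2 * a := by linarith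
  have hα2 : Aalpha a ^ 2 = 2 * (1 - 2 * a) := Real.sq_sqrt (by linarith)
  have hβ2 : Abeta a ^ 2 = 8 * a * (1 - 2 * a) := Real.sq_sqrt (by nlinarith)
  have hs2 : Real.sqrt (2 * a) ^ 2 = 2 * a := Real.sq_sqrt (by linarith)
  have hαpos : (0:ℝ) < Aalpha a ^ 2 := by rw [hα2]; linarith
  have hsp : (0:ℝ) < Real.sqrt (2 * a) + 1 := by positivity
  -- numerator identity
  have hnum : ((Aalpha a : ℂ))^2 * Real.cosh (Abeta a * t)
      + Complex.I * (Abeta a) * Real.sinh (Abeta a * t)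
      = ((Aalpha a ^ 2 : ℝ) : ℂ) * Anum t a := by
    have hb : (Abeta a : ℂ)^2 = 4 * (a:ℂ) * (Aalpha a : ℂ)^2 := by
      have : Abeta a ^ 2 = 4 * a * Aalpha a ^ 2 := by rw [hβ2, hα2]; ring
      exact_mod_cast congrArg (fun r : ℝ => (r : ℂ)) this
    rw [sinh_eq_mshc (Abeta a * t)]
    unfold Anum
    push_cast
    linear_combination (Complex.I * (t:ℂ) * (mshc (Abeta a * t) : ℂ)) * hb
  -- denominator identity
  have hden : Real.sqrt (2 * a) * Real.cos (Aalpha a * x) - Real.cosh (Abeta a * t)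
      = Aalpha a ^ 2 * Aden t x a := by
    have hc : Real.cos (Aalpha a * x) = 1 - 2 * Real.sin (Aalpha a * x / 2) ^ 2 := by
      rw [show Aalpha a * x = 2 * (Aalpha a * x / 2) by ring, Real.cos_two_mul',
        Real.cos_sq']
      ring
    have hch : Real.cosh (Abeta a * t) = 1 + 2 * Real.sinh (Abeta a * t / 2) ^ 2 := by
      rw [show Abeta a * t = 2 * (Abeta a * t / 2) by ring, Real.cosh_two_mul,
        Real.cosh_sq]
      ring
    rw [hc, hch, sin_eq_msc (Aalpha a * x / 2), sinh_eq_mshc (Abeta a * t / 2)]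
    unfold Aden
    set s := Real.sqrt (2 * a) with hsdef
    set P := msc (Aalpha a * x / 2) with hPdef
    set Q := mshc (Abeta a * t / 2) with hQdef
    have key : Aalpha a ^ 2 * (1 / (2 * (s + 1))) = 1 - s := by
      rw [mul_one_div, div_eq_iff (by positivity : (2:ℝ) * (s + 1) ≠ 0)]
      linear_combination hα2 + 2 * hs2
    have expand : Aalpha a ^ 2 * (s * (-(x ^ 2 / 2) * P ^ 2) - 1 / (2 * (s + 1))
          - 2 * a * t ^ 2 * Q ^ 2)
        = Aalpha a ^ 2 * (s * (-(x ^ 2 / 2) * P ^ 2)) - (1 - s)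
          - Aalpha a ^ 2 * (2 * a * t ^ 2 * Q ^ 2) := by
      rw [mul_sub, mul_sub, key]
    rw [expand]
    linear_combination (-(t ^ 2 * Q ^ 2 / 2)) * hβ2 + (2 * a * t ^ 2 * Q ^ 2) * hα2
  -- put together
  unfold BA
  congr 1
  congr 1
  rw [hnum]
  have hdenC : ((Real.sqrt (2 * a) : ℂ)) * Real.cos (Aalpha a * x)
      - (Real.cosh (Abeta a * t) : ℂ) = ((Aalpha a ^ 2 : ℝ) : ℂ) * ((Aden t x a : ℝ) : ℂ) := by
    calc ((Real.sqrt (2 * a) : ℂ)) * Real.cos (Aalpha a * x)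
        - (Real.cosh (Abeta a * t) : ℂ)
        = ((Real.sqrt (2 * a) * Real.cos (Aalpha a * x) - Real.cosh (Abeta a * t) : ℝ) : ℂ) := by
          push_cast; ring
      _ = ((Aalpha a ^ 2 * Aden t x a : ℝ) : ℂ) := by rw [hden]
      _ = ((Aalpha a ^ 2 : ℝ) : ℂ) * ((Aden t x a : ℝ) : ℂ) := by push_cast; ring
  rw [hdenC]
  have hne : ((Aalpha a ^ 2 : ℝ) : ℂ) ≠ 0 := by
    simp only [ne_eq, Complex.ofReal_eq_zero]
    exact ne_of_gt hαpos
  rw [mul_div_mul_left _ _ hne]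

theorem akhmediev_to_peregrine_limit (t x : ℝ) :
    Filter.Tendsto (fun a : ℝ => BA a t x)
      (nhdsWithin (1/2) (Set.Iio (1/2))) (nhds (BP t x)) := by
  set F := nhdsWithin (1/2 : ℝ) (Set.Iio (1/2)) with hF
  have hFle : F ≤ nhds (1/2 : ℝ) := nhdsWithin_le_nhds
  have hid : Filter.Tendsto (fun a : ℝ => a) F (nhds (1/2 : ℝ)) := hFle
  -- limits of the parameters
  have hαlim : Filter.Tendsto Aalpha F (nhds 0) := by
    have hc : Continuous Aalpha := Real.continuous_sqrt.comp (by continuity)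
    have := (hc.tendsto (1/2 : ℝ)).comp hid
    rw [show Aalpha (1/2) = 0 by norm_num [Aalpha]] at this; exact this
  have hβlim : Filter.Tendsto Abeta F (nhds 0) := by
    have hc : Continuous Abeta := Real.continuous_sqrt.comp (by continuity)
    have := (hc.tendsto (1/2 : ℝ)).comp hid
    rw [show Abeta (1/2) = 0 by norm_num [Abeta]] at this; exact this
  have hslim : Filter.Tendsto (fun a : ℝ => Real.sqrt (2 * a)) F (nhds 1) := by
    have hc : Continuous (fun a : ℝ => Real.sqrt (2 * a)) :=
      Real.continuous_sqrt.comp (by continuity)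
    have := (hc.tendsto (1/2 : ℝ)).comp hid
    simpa [Function.comp_def] using this
  have hβt : Filter.Tendsto (fun a : ℝ => Abeta a * t) F (nhds 0) := by
    simpa using hβlim.mul_const t
  have hβt2 : Filter.Tendsto (fun a : ℝ => Abeta a * t / 2) F (nhds 0) := by
    simpa using hβt.div_const 2
  have hαx2 : Filter.Tendsto (fun a : ℝ => Aalpha a * x / 2) F (nhds 0) := by
    simpa using (hαlim.mul_const x).div_const 2
  have hQ : Filter.Tendsto (fun a : ℝ => mshc (Abeta a * t)) F (nhds 1) :=
    tendsto_mshc.comp hβt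
  have hQ2 : Filter.Tendsto (fun a : ℝ => mshc (Abeta a * t / 2)) F (nhds 1) :=
    tendsto_mshc.comp hβt2
  have hP : Filter.Tendsto (fun a : ℝ => msc (Aalpha a * x / 2)) F (nhds 1) :=
    tendsto_msc.comp hαx2
  have hcosh : Filter.Tendsto (fun a : ℝ => Real.cosh (Abeta a * t)) F (nhds 1) := by
    have := (Real.continuous_cosh.tendsto 0).comp hβt
    simpa [Function.comp_def] using this
  -- limit of the numerator
  have hnumIm : Filter.Tendsto (fun a : ℝ => 4 * a * t * mshc (Abeta a * t)) F
      (nhds (2 * t)) := by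
    have h := (((hid.const_mul 4).mul_const t).mul hQ)
    have e : (4:ℝ) * (1/2) * t * 1 = 2 * t := by norm_num
    rwa [e] at h
  have hnum : Filter.Tendsto (fun a : ℝ => Anum t a) F
      (nhds (1 + Complex.I * (2 * t : ℝ))) := by
    unfold Anum
    have h1 : Filter.Tendsto (fun a : ℝ => ((Real.cosh (Abeta a * t) : ℝ) : ℂ)) F
        (nhds ((1:ℝ) : ℂ)) := (Complex.continuous_ofReal.tendsto _).comp hcosh
    have h2 : Filter.Tendsto (fun a : ℝ => ((4 * a * t * mshc (Abeta a * t) : ℝ) : ℂ)) F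
        (nhds ((2 * t : ℝ) : ℂ)) := (Complex.continuous_ofReal.tendsto _).comp hnumIm
    simpa using h1.add (h2.const_mul Complex.I)
  -- limit of the denominator
  set L : ℝ := -(x ^ 2 / 2) - 1/4 - t ^ 2 with hL
  have hden : Filter.Tendsto (fun a : ℝ => Aden t x a) F (nhds L) := by
    unfold Aden
    have h1 : Filter.Tendsto
        (fun a : ℝ => Real.sqrt (2 * a) * (-(x ^ 2 / 2) * msc (Aalpha a * x / 2) ^ 2)) F
        (nhds (1 * (-(x ^ 2 / 2) * 1 ^ 2))) :=
      hslim.mul ((tendsto_const_nhds.mul (hP.pow 2)))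
    have h2 : Filter.Tendsto (fun a : ℝ => 1 / (2 * (Real.sqrt (2 * a) + 1))) F
        (nhds (1 / (2 * (1 + 1)))) := by
      apply Filter.Tendsto.div tendsto_const_nhds
      · exact (hslim.add_const 1).const_mul 2
      · norm_num
    have h3 : Filter.Tendsto (fun a : ℝ => 2 * a * t ^ 2 * mshc (Abeta a * t / 2) ^ 2) F
        (nhds (2 * (1/2) * t ^ 2 * 1 ^ 2)) :=
      ((hid.const_mul 2).mul_const (t ^ 2)).mul (hQ2.pow 2)
    have := (h1.sub h2).sub h3
    convert this using 2
    rw [hL]; ring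
  have hLneg : L < 0 := by rw [hL]; nlinarith [sq_nonneg x, sq_nonneg t]
  have hLne : ((L : ℝ) : ℂ) ≠ 0 := by
    simp only [ne_eq, Complex.ofReal_eq_zero]
    exact ne_of_lt hLneg
  have hdenC : Filter.Tendsto (fun a : ℝ => ((Aden t x a : ℝ) : ℂ)) F (nhds ((L : ℝ) : ℂ)) :=
    (Complex.continuous_ofReal.tendsto _).comp hden
  -- the full limit
  have hmain : Filter.Tendsto
      (fun a : ℝ => Complex.exp (Complex.I * t) * (1 + Anum t a / ((Aden t x a : ℝ) : ℂ))) F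
      (nhds (Complex.exp (Complex.I * t) * (1 + (1 + Complex.I * (2 * t : ℝ)) / ((L:ℝ) : ℂ)))) :=
    tendsto_const_nhds.mul (tendsto_const_nhds.add (hnum.div hdenC hLne))
  have hBP : Complex.exp (Complex.I * t) * (1 + (1 + Complex.I * (2 * t : ℝ)) / ((L:ℝ) : ℂ))
      = BP t x := by
    unfold BP
    congr 1
    have hpos : (0:ℝ) < 1 + 4 * t ^ 2 + 2 * x ^ 2 := by positivity
    have hne2 : (1 : ℂ) + 4 * (t:ℂ)^2 + 2 * (x:ℂ)^2 ≠ 0 := by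
      have : ((1 + 4 * t ^ 2 + 2 * x ^ 2 : ℝ) : ℂ) ≠ 0 := by
        simp only [ne_eq, Complex.ofReal_eq_zero]
        exact ne_of_gt hpos
      simpa [Complex.ofReal_add, Complex.ofReal_mul, Complex.ofReal_pow] using this
    have hLrel : ((L : ℝ) : ℂ) = -(1 + 4 * (t:ℂ)^2 + 2 * (x:ℂ)^2) / 4 := by
      rw [hL]; push_cast; ring
    rw [hLrel, div_div_eq_mul_div, div_neg, ← sub_eq_add_neg,
      show (1 + Complex.I * ((2 * t : ℝ) : ℂ)) * 4 = 4 * (1 + 2 * Complex.I * (t:ℂ)) by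
        push_cast; ring]
  rw [← hBP]
  refine hmain.congr' ?_
  have h1 : ∀ᶠ a in F, (0:ℝ) < a :=
    (eventually_gt_nhds (by norm_num)).filter_mono hFle
  have h2 : ∀ᶠ a in F, a ∈ Set.Iio (1/2 : ℝ) := self_mem_nhdsWithin
  filter_upwards [h1, h2] with a ha hb
  exact (BA_eq t x ha hb).symm
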